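/- Let v be an admissible weight function. If sup{ v(x)/v(y) : 0 ≤ x ≤ y } = ∞, then there exists f ∈ C_{0,v}(ℝ₊) such that T_t f does not converge to 0 in norm as t → ∞. -/

import Mathlib

open MeasureTheory Filter Set
open scoped ENNReal

/-- The `L^p_v` norm of a function on `[0,∞)`:
`‖f‖ = (∫₀^∞ |f(x)|^p v(x) dx)^(1/p)`. -/
noncomputable def lpNorm (p : ℝ) (v : ℝ → ℝ) (f : ℝ → ℝ) : ℝ :=
  (∫ x in Set.Ici (0:ℝ), |f x| ^ p * v x) ^ (1 / p)

/-- Membership in the weighted Lebesgue space `L^p_v(ℝ₊)`. -/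
def MemLpW (p : ℝ) (v : ℝ → ℝ) (f : ℝ → ℝ) : Prop :=
  AEStronglyMeasurable f (volume.restrict (Set.Ici (0:ℝ))) ∧
    IntegrableOn (fun x => |f x| ^ p * v x) (Set.Ici (0:ℝ))

/-- The left translation operator `(T_t f)(x) = f (x + t)`. -/
def translateW (t : ℝ) (f : ℝ → ℝ) : ℝ → ℝ := fun x => f (x + t)

/-- `v` is an admissible weight function: strictly positive, locally integrable on `[0,∞)`,
and there are `M ≥ 1`, `w ≥ 0` with `v x ≤ M * exp (w*t) * v (x+t)` for all `x, t ≥ 0`. -/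
def AdmissibleWeight (v : ℝ → ℝ) : Prop :=
  (∀ x, 0 ≤ x → 0 < v x) ∧
  (∀ a, 0 ≤ a → IntegrableOn v (Set.Icc (0:ℝ) a)) ∧
  ∃ M, 1 ≤ M ∧ ∃ w, 0 ≤ w ∧ ∀ x, 0 ≤ x → ∀ t, 0 ≤ t →
    v x ≤ M * Real.exp (w * t) * v (x + t)

/-- The set `{ v x / v y : 0 ≤ x ≤ y }`. -/
def ratioSet (v : ℝ → ℝ) : Set ℝ := {r | ∃ x y, 0 ≤ x ∧ x ≤ y ∧ r = v x / v y}

/-- Membership in `C_{0,v}(ℝ₊)`: continuous on `[0,∞)` with `|f x| * v x → 0` as `x → ∞`. -/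
def MemC0 (v : ℝ → ℝ) (f : ℝ → ℝ) : Prop :=
  ContinuousOn f (Set.Ici (0:ℝ)) ∧
    Filter.Tendsto (fun x => |f x| * v x) Filter.atTop (nhds 0)

/-- The norm on `C_{0,v}(ℝ₊)`: `‖f‖ = sup { |f x| * v x : x ≥ 0 }`. -/
noncomputable def c0Norm (v : ℝ → ℝ) (f : ℝ → ℝ) : ℝ :=
  sSup ((fun x => |f x| * v x) '' Set.Ici (0:ℝ))

/-! ### Auxiliary development -/

structure AuxSetup where
  v : ℝ → ℝ
  M : ℝ
  w : ℝ
  X : ℝ → ℝ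
  Y : ℝ → ℝ
  hpos : ∀ x, 0 ≤ x → 0 < v x
  hM : 1 ≤ M
  hw : 1 ≤ w
  hbd : ∀ x, 0 ≤ x → ∀ t, 0 ≤ t → v x ≤ M * Real.exp (w * t) * v (x + t)
  hXY : ∀ B, 0 ≤ X B ∧ X B ≤ Y B ∧ B < v (X B) / v (Y B)

namespace AuxSetup

variable (S : AuxSetup)

noncomputable def D (b : ℝ) : ℝ :=
  S.M * Real.exp (S.w * b) * (S.M * Real.exp (S.w * b)) * S.v b / S.v 0

noncomputable def Bnd (yprev : ℝ) (n : ℕ) : ℝ :=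
  max (S.D (yprev + 2)) (max (S.M * Real.exp (S.w * (n + 1))) (S.M * Real.exp S.w * 2 ^ n))

noncomputable def B : ℕ → ℝ
  | 0 => S.Bnd 0 0
  | n + 1 => S.Bnd (S.Y (B n)) (n + 1)

noncomputable def xs (n : ℕ) : ℝ := S.X (S.B n)
noncomputable def ys (n : ℕ) : ℝ := S.Y (S.B n)

noncomputable def yp : ℕ → ℝ
  | 0 => 0
  | n + 1 => S.ys n

noncomputable def c (n : ℕ) : ℝ := S.ys n - 1 / 2

noncomputable def g (n : ℕ) (x : ℝ) : ℝ :=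
  (S.v (S.xs n))⁻¹ * max 0 (1 / 2 - |x - S.c n|)

noncomputable def f (x : ℝ) : ℝ := ∑' n, S.g n x

lemma hM0 : (0:ℝ) < S.M := lt_of_lt_of_le one_pos S.hM
lemma hw0 : (0:ℝ) < S.w := lt_of_lt_of_le one_pos S.hw

lemma xs_nonneg (n : ℕ) : 0 ≤ S.xs n := (S.hXY (S.B n)).1
lemma xs_le_ys (n : ℕ) : S.xs n ≤ S.ys n := (S.hXY (S.B n)).2.1
lemma ys_nonneg (n : ℕ) : 0 ≤ S.ys n := le_trans (S.xs_nonneg n) (S.xs_le_ys n)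
lemma hr (n : ℕ) : S.B n < S.v (S.xs n) / S.v (S.ys n) := (S.hXY (S.B n)).2.2
lemma vxs_pos (n : ℕ) : 0 < S.v (S.xs n) := S.hpos _ (S.xs_nonneg n)
lemma vys_pos (n : ℕ) : 0 < S.v (S.ys n) := S.hpos _ (S.ys_nonneg n)

lemma mono_bound {x y : ℝ} (hx : 0 ≤ x) (hxy : x ≤ y) :
    S.v x ≤ S.M * Real.exp (S.w * (y - x)) * S.v y := by
  have := S.hbd x hx (y - x) (by linarith)
  simpa using this

lemma ratio_le {x y : ℝ} (hx : 0 ≤ x) (hxy : x ≤ y) :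
    S.v x / S.v y ≤ S.M * Real.exp (S.w * (y - x)) := by
  have hy : 0 < S.v y := S.hpos y (le_trans hx hxy)
  rw [div_le_iff₀ hy]
  exact S.mono_bound hx hxy

lemma ratio_le_D {x y b : ℝ} (hx : 0 ≤ x) (hxy : x ≤ y) (hyb : y ≤ b) :
    S.v x / S.v y ≤ S.D b := by
  have hb : 0 ≤ b := le_trans (le_trans hx hxy) hyb
  have hvb : 0 < S.v b := S.hpos b hb
  have hv0 : 0 < S.v 0 := S.hpos 0 le_rfl
  have hvy : 0 < S.v y := S.hpos y (le_trans hx hxy)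
  set A : ℝ := S.M * Real.exp (S.w * b) with hA
  have hA0 : 0 < A := mul_pos S.hM0 (Real.exp_pos _)
  have h1 : S.v x ≤ A * S.v b := by
    have h1a := S.mono_bound hx (le_trans hxy hyb)
    have h1b : Real.exp (S.w * (b - x)) ≤ Real.exp (S.w * b) := by
      apply Real.exp_le_exp.2
      have : b - x ≤ b := by linarith
      exact mul_le_mul_of_nonneg_left this (le_of_lt S.hw0)
    calc S.v x ≤ S.M * Real.exp (S.w * (b - x)) * S.v b := h1a
      _ ≤ A * S.v b := by
          apply mul_le_mul_of_nonneg_right _ (le_of_lt hvb)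
          exact mul_le_mul_of_nonneg_left h1b (le_of_lt S.hM0)
  have h2 : S.v 0 / A ≤ S.v y := by
    rw [div_le_iff₀ hA0]
    have h2a := S.mono_bound (le_refl (0:ℝ)) (le_trans hx hxy)
    have h2b : Real.exp (S.w * (y - 0)) ≤ Real.exp (S.w * b) := by
      apply Real.exp_le_exp.2
      have : y - 0 ≤ b := by linarith
      exact mul_le_mul_of_nonneg_left this (le_of_lt S.hw0)
    calc S.v 0 ≤ S.M * Real.exp (S.w * (y - 0)) * S.v y := h2a
      _ ≤ A * S.v y := by
          apply mul_le_mul_of_nonneg_right _ (le_of_lt hvy)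
          exact mul_le_mul_of_nonneg_left h2b (le_of_lt S.hM0)
      _ = S.v y * A := by ring
  have h3 : S.v x / S.v y ≤ (A * S.v b) / (S.v 0 / A) :=
    div_le_div₀ (by positivity) h1 (by positivity) h2
  calc S.v x / S.v y ≤ (A * S.v b) / (S.v 0 / A) := h3
    _ = A * A * S.v b / S.v 0 := by
        field_simp
    _ = S.D b := by rw [D, hA]

lemma B_eq (n : ℕ) : S.B n = S.Bnd (S.yp n) n := by
  cases n with
  | zero => rfl
  | succ k => simp [B, yp, ys]

lemma yp_nonneg (n : ℕ) : 0 ≤ S.yp n := by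
  cases n with
  | zero => exact le_rfl
  | succ k => exact S.ys_nonneg k

lemma ygap (n : ℕ) : S.yp n + 2 < S.ys n := by
  by_contra h
  push_neg at h
  have h1 : S.v (S.xs n) / S.v (S.ys n) ≤ S.D (S.yp n + 2) :=
    S.ratio_le_D (S.xs_nonneg n) (S.xs_le_ys n) h
  have h2 : S.D (S.yp n + 2) ≤ S.B n := by
    rw [S.B_eq n]; exact le_max_left _ _
  have := S.hr n
  linarith

lemma ys_succ (n : ℕ) : S.ys n + 2 < S.ys (n + 1) := S.ygap (n + 1)

lemma ys_strictMono : StrictMono S.ys :=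
  strictMono_nat_of_lt_succ (fun n => by have := S.ys_succ n; linarith)

lemma ys_gap {m n : ℕ} (h : m < n) : S.ys m + 2 < S.ys n := by
  have h1 := S.ys_succ m
  have h2 : S.ys (m + 1) ≤ S.ys n := S.ys_strictMono.monotone h
  linarith

lemma ys_lb (n : ℕ) : 2 * (n : ℝ) + 2 < S.ys n := by
  induction n with
  | zero =>
      have h := S.ygap 0
      rw [show S.yp 0 = 0 from rfl] at h
      push_cast
      linarith
  | succ k ih =>
      have := S.ys_succ k
      push_cast
      linarith

lemma B_ge_exp (n : ℕ) : S.M * Real.exp (S.w * (n + 1)) ≤ S.B n := by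
  rw [S.B_eq n]
  exact le_trans (le_max_left _ _) (le_max_right _ _)

lemma B_ge_pow (n : ℕ) : S.M * Real.exp S.w * 2 ^ n ≤ S.B n := by
  rw [S.B_eq n]
  exact le_trans (le_max_right _ _) (le_max_right _ _)

lemma gap_lb (n : ℕ) : (n : ℝ) + 1 < S.ys n - S.xs n := by
  have h1 : S.M * Real.exp (S.w * (n + 1)) < S.v (S.xs n) / S.v (S.ys n) :=
    lt_of_le_of_lt (S.B_ge_exp n) (S.hr n)
  have h2 := S.ratio_le (S.xs_nonneg n) (S.xs_le_ys n)
  have h3 : Real.exp (S.w * (n + 1)) < Real.exp (S.w * (S.ys n - S.xs n)) := by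
    have := lt_of_lt_of_le h1 h2
    exact lt_of_mul_lt_mul_left this (le_of_lt S.hM0)
  have h4 : S.w * ((n : ℝ) + 1) < S.w * (S.ys n - S.xs n) := Real.exp_lt_exp.1 h3
  exact lt_of_mul_lt_mul_left h4 (le_of_lt S.hw0)

lemma rbig (n : ℕ) : S.M * Real.exp S.w * 2 ^ n < S.v (S.xs n) / S.v (S.ys n) :=
  lt_of_le_of_lt (S.B_ge_pow n) (S.hr n)

lemma g_nonneg (n : ℕ) (x : ℝ) : 0 ≤ S.g n x := by
  apply mul_nonneg
  · exact inv_nonneg.2 (le_of_lt (S.vxs_pos n))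
  · exact le_max_left _ _

lemma g_support {n : ℕ} {x : ℝ} (h : S.g n x ≠ 0) : S.ys n - 1 < x ∧ x < S.ys n := by
  have hmax : max 0 (1 / 2 - |x - S.c n|) ≠ 0 := by
    intro h0
    apply h
    rw [g, h0, mul_zero]
  have hlt : |x - S.c n| < 1 / 2 := by
    by_contra hc
    push_neg at hc
    exact hmax (max_eq_left (by linarith))
  rw [abs_lt] at hlt
  rw [c] at hlt
  constructor <;> linarith [hlt.1, hlt.2]

lemma g_unique {m n : ℕ} {x : ℝ} (hm : S.g m x ≠ 0) (hn : S.g n x ≠ 0) : m = n := by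
  have h1 := S.g_support hm
  have h2 := S.g_support hn
  rcases lt_trichotomy m n with h | h | h
  · exfalso; have := S.ys_gap h; linarith [h1.2, h2.1]
  · exact h
  · exfalso; have := S.ys_gap h; linarith [h1.1, h2.2]

lemma g_term_bound (n : ℕ) {x : ℝ} (hx : 0 ≤ x) :
    S.g n x * S.v x ≤ (1 / 2) ^ (n + 1) := by
  by_cases h : S.g n x = 0
  · rw [h, zero_mul]; positivity
  · have hsupp := S.g_support h
    have hvx : 0 < S.v x := S.hpos x hx
    have hvy := S.vys_pos n
    have hvxs := S.vxs_pos n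
    have hg : S.g n x ≤ (S.v (S.xs n))⁻¹ * (1 / 2) := by
      apply mul_le_mul_of_nonneg_left _ (inv_nonneg.2 (le_of_lt hvxs))
      apply max_le (by norm_num)
      have := abs_nonneg (x - S.c n)
      linarith
    have hvb : S.v x ≤ S.M * Real.exp S.w * S.v (S.ys n) := by
      have h1 := S.mono_bound hx (le_of_lt hsupp.2)
      have h2 : Real.exp (S.w * (S.ys n - x)) ≤ Real.exp S.w := by
        apply Real.exp_le_exp.2
        have hle : S.ys n - x ≤ 1 := by linarith [hsupp.1]
        calc S.w * (S.ys n - x) ≤ S.w * 1 :=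
              mul_le_mul_of_nonneg_left hle (le_of_lt S.hw0)
          _ = S.w := mul_one _
      calc S.v x ≤ S.M * Real.exp (S.w * (S.ys n - x)) * S.v (S.ys n) := h1
        _ ≤ S.M * Real.exp S.w * S.v (S.ys n) := by
            apply mul_le_mul_of_nonneg_right _ (le_of_lt hvy)
            exact mul_le_mul_of_nonneg_left h2 (le_of_lt S.hM0)
    have key : S.g n x * S.v x ≤
        (S.v (S.xs n))⁻¹ * (1 / 2) * (S.M * Real.exp S.w * S.v (S.ys n)) :=
      mul_le_mul hg hvb (le_of_lt hvx) (by positivity)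
    have h5 : S.M * Real.exp S.w * 2 ^ n * S.v (S.ys n) < S.v (S.xs n) :=
      (lt_div_iff₀ hvy).1 (S.rbig n)
    have hpow : (1 / 2 : ℝ) ^ (n + 1) * 2 ^ n = 1 / 2 := by
      rw [one_div, pow_succ, inv_pow]
      field_simp
    have hfin : (S.v (S.xs n))⁻¹ * (1 / 2) * (S.M * Real.exp S.w * S.v (S.ys n)) ≤
        (1 / 2) ^ (n + 1) := by
      rw [show (S.v (S.xs n))⁻¹ * (1 / 2) * (S.M * Real.exp S.w * S.v (S.ys n)) =
        (1 / 2) * (S.M * Real.exp S.w * S.v (S.ys n)) / S.v (S.xs n) from by ring]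
      rw [div_le_iff₀ hvxs]
      calc (1 / 2) * (S.M * Real.exp S.w * S.v (S.ys n))
          = ((1 / 2 : ℝ) ^ (n + 1) * 2 ^ n) * (S.M * Real.exp S.w * S.v (S.ys n)) := by
            rw [hpow]
        _ = (1 / 2) ^ (n + 1) * (S.M * Real.exp S.w * 2 ^ n * S.v (S.ys n)) := by ring
        _ ≤ (1 / 2) ^ (n + 1) * S.v (S.xs n) :=
            mul_le_mul_of_nonneg_left (le_of_lt h5) (by positivity)
    exact le_trans key hfin

lemma f_fin {x : ℝ} {N : ℕ} (h : x ≤ 2 * (N : ℝ)) :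
    S.f x = ∑ n ∈ Finset.range N, S.g n x := by
  apply tsum_eq_sum
  intro n hn
  have hnN : N ≤ n := by simpa using hn
  by_contra hg
  have hsupp := S.g_support hg
  have hlb := S.ys_lb n
  have hcast : (N : ℝ) ≤ (n : ℝ) := by exact_mod_cast hnN
  linarith [hsupp.1]

lemma f_cases (x : ℝ) :
    ((∀ n, S.g n x = 0) ∧ S.f x = 0) ∨ ∃ m, S.g m x ≠ 0 ∧ S.f x = S.g m x := by
  by_cases hall : ∀ n, S.g n x = 0
  · left
    refine ⟨hall, ?_⟩
    have : S.f x = ∑' n, (0 : ℝ) := tsum_congr hall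
    rw [this, tsum_zero]
  · right
    push_neg at hall
    obtain ⟨m, hm⟩ := hall
    refine ⟨m, hm, ?_⟩
    have hsupp := S.g_support hm
    have hlb := S.ys_lb m
    have hx0 : 0 < x := by linarith [hsupp.1]
    set N : ℕ := Nat.ceil x with hN
    have hxN : x ≤ (N : ℝ) := Nat.le_ceil x
    have h2N : x ≤ 2 * (N : ℝ) := by
      have : (0:ℝ) ≤ (N : ℝ) := Nat.cast_nonneg N
      linarith
    have hmN : m < N := by
      have : 2 * (m : ℝ) + 1 < x := by linarith [hsupp.1]
      have hmx : (m : ℝ) < (N : ℝ) := by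
        have hm0 : (0:ℝ) ≤ (m : ℝ) := Nat.cast_nonneg m
        linarith
      exact_mod_cast hmx
    rw [S.f_fin h2N]
    apply Finset.sum_eq_single_of_mem m (Finset.mem_range.2 hmN)
    intro n _ hne
    by_contra hg
    exact hne (S.g_unique hg hm)

lemma f_nonneg (x : ℝ) : 0 ≤ S.f x := by
  rcases S.f_cases x with ⟨_, h⟩ | ⟨m, _, h⟩
  · rw [h]
  · rw [h]; exact S.g_nonneg m x

lemma f_bound {x : ℝ} (hx : 0 ≤ x) : S.f x * S.v x ≤ 1 / 2 := by
  rcases S.f_cases x with ⟨_, h⟩ | ⟨m, _, h⟩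
  · rw [h, zero_mul]; norm_num
  · rw [h]
    calc S.g m x * S.v x ≤ (1 / 2) ^ (m + 1) := S.g_term_bound m hx
      _ ≤ (1 / 2) ^ 1 := by
          apply pow_le_pow_of_le_one (by norm_num) (by norm_num)
          omega
      _ = 1 / 2 := pow_one _

lemma f_tail {x : ℝ} (hx : 0 ≤ x) {k : ℕ} (hk : S.ys k < x) :
    S.f x * S.v x ≤ (1 / 2) ^ (k + 1) := by
  rcases S.f_cases x with ⟨_, h⟩ | ⟨m, hm, h⟩
  · rw [h, zero_mul]; positivity
  · rw [h]
    have hsupp := S.g_support hm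
    have hkm : k < m := by
      by_contra hc
      push_neg at hc
      have : S.ys m ≤ S.ys k := S.ys_strictMono.monotone hc
      linarith [hsupp.2]
    calc S.g m x * S.v x ≤ (1 / 2) ^ (m + 1) := S.g_term_bound m hx
      _ ≤ (1 / 2) ^ (k + 1) := by
          apply pow_le_pow_of_le_one (by norm_num) (by norm_num)
          omega

lemma g_cont (n : ℕ) : Continuous (S.g n) := by
  apply continuous_const.mul
  exact continuous_const.max
    (continuous_const.sub (continuous_id.sub continuous_const).abs)

lemma f_cont : Continuous S.f := by
  rw [continuous_iff_continuousAt]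
  intro x₀
  set N : ℕ := Nat.ceil (max 0 x₀) + 1 with hN
  have hx₀ : x₀ < 2 * (N : ℝ) := by
    have h1 : x₀ ≤ max 0 x₀ := le_max_right _ _
    have h2 : max 0 x₀ ≤ (Nat.ceil (max 0 x₀) : ℝ) := Nat.le_ceil _
    have h3 : ((Nat.ceil (max 0 x₀) : ℕ) : ℝ) + 1 ≤ (N : ℝ) := by
      rw [hN]; push_cast; linarith
    have h4 : (0:ℝ) ≤ (N:ℝ) := Nat.cast_nonneg N
    linarith
  have hev : S.f =ᶠ[nhds x₀] (fun x => ∑ n ∈ Finset.range N, S.g n x) := by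
    filter_upwards [Iio_mem_nhds hx₀] with x hx
    exact S.f_fin (le_of_lt hx)
  have hc : ContinuousAt (fun x => ∑ n ∈ Finset.range N, S.g n x) x₀ :=
    (continuous_finset_sum _ (fun n _ => S.g_cont n)).continuousAt
  exact hc.congr hev.symm

lemma f_val (n : ℕ) : S.f (S.c n) = (S.v (S.xs n))⁻¹ * (1 / 2) := by
  have hg : S.g n (S.c n) = (S.v (S.xs n))⁻¹ * (1 / 2) := by
    rw [g, sub_self, abs_zero]
    norm_num
  have hgne : S.g n (S.c n) ≠ 0 := by
    rw [hg]
    have := S.vxs_pos n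
    positivity
  rcases S.f_cases (S.c n) with ⟨hall, _⟩ | ⟨m, hm, h⟩
  · exact absurd (hall n) hgne
  · have := S.g_unique hm hgne
    rw [h, this, hg]

lemma f_tendsto : Filter.Tendsto (fun x => |S.f x| * S.v x) Filter.atTop (nhds 0) := by
  rw [Metric.tendsto_nhds]
  intro ε hε
  obtain ⟨k, hk⟩ := exists_pow_lt_of_lt_one hε (show (1/2 : ℝ) < 1 by norm_num)
  have hk1 : (1 / 2 : ℝ) ^ (k + 1) < ε := by
    calc (1 / 2 : ℝ) ^ (k + 1) ≤ (1 / 2) ^ k := by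
          apply pow_le_pow_of_le_one (by norm_num) (by norm_num)
          omega
      _ < ε := hk
  filter_upwards [eventually_ge_atTop (max 0 (S.ys k + 1))] with x hx
  have hx0 : 0 ≤ x := le_trans (le_max_left _ _) hx
  have hxk : S.ys k < x := by
    have := le_trans (le_max_right _ _) hx
    linarith
  have hvx : 0 < S.v x := S.hpos x hx0
  rw [Real.dist_eq, sub_zero, abs_of_nonneg (mul_nonneg (abs_nonneg _) (le_of_lt hvx)),
    abs_of_nonneg (S.f_nonneg x)]
  exact lt_of_le_of_lt (S.f_tail hx0 hxk) hk1

end AuxSetup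

theorem c0_exists_not_tendsto_zero_of_unbounded_ratio
    (v : ℝ → ℝ) (hv : AdmissibleWeight v)
    (hsup : ∀ B : ℝ, ∃ r ∈ ratioSet v, B < r) :
    ∃ f, MemC0 v f ∧
      ¬ Filter.Tendsto (fun t => c0Norm v (translateW t f)) Filter.atTop (nhds 0) := by
  obtain ⟨hpos, _, M, hM, w, hw, hbd⟩ := hv
  -- replace w by max w 1
  have hbd' : ∀ x, 0 ≤ x → ∀ t, 0 ≤ t →
      v x ≤ M * Real.exp (max w 1 * t) * v (x + t) := by
    intro x hx t ht
    have h1 := hbd x hx t ht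
    have h2 : Real.exp (w * t) ≤ Real.exp (max w 1 * t) :=
      Real.exp_le_exp.2 (mul_le_mul_of_nonneg_right (le_max_left _ _) ht)
    have hv : 0 < v (x + t) := hpos _ (by linarith)
    calc v x ≤ M * Real.exp (w * t) * v (x + t) := h1
      _ ≤ M * Real.exp (max w 1 * t) * v (x + t) := by
          apply mul_le_mul_of_nonneg_right _ (le_of_lt hv)
          exact mul_le_mul_of_nonneg_left h2 (by linarith)
  have hsup' : ∀ B : ℝ, ∃ x y, 0 ≤ x ∧ x ≤ y ∧ B < v x / v y := by
    intro B
    obtain ⟨r, hr, hB⟩ := hsup B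
    obtain ⟨x, y, hx, hxy, hreq⟩ := hr
    exact ⟨x, y, hx, hxy, hreq ▸ hB⟩
  choose X Y h1 h2 h3 using hsup'
  set S : AuxSetup := ⟨v, M, max w 1, X, Y, hpos, hM, le_max_right _ _, hbd',
    fun B => ⟨h1 B, h2 B, h3 B⟩⟩ with hS
  refine ⟨S.f, ⟨S.f_cont.continuousOn, S.f_tendsto⟩, ?_⟩
  -- the translation times
  set t : ℕ → ℝ := fun n => S.ys n - 1 / 2 - S.xs n with ht
  have htn : ∀ n : ℕ, (n : ℝ) < t n := by
    intro n
    have := S.gap_lb n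
    rw [ht]
    simp only
    linarith
  have ht0 : ∀ n : ℕ, 0 ≤ t n := fun n =>
    le_trans (Nat.cast_nonneg n) (le_of_lt (htn n))
  -- lower bound on the norm of translates
  have hnorm : ∀ n, (1 / 2 : ℝ) ≤ c0Norm v (translateW (t n) S.f) := by
    intro n
    have hbddAbove : BddAbove ((fun x => |translateW (t n) S.f x| * v x) '' Set.Ici (0:ℝ)) := by
      refine ⟨M * Real.exp (max w 1 * t n) * (1 / 2), ?_⟩
      rintro a ⟨x, hx, rfl⟩
      simp only [translateW]
      have hx0 : (0:ℝ) ≤ x := hx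
      have hxt : 0 ≤ x + t n := by linarith [ht0 n]
      have hvle : v x ≤ M * Real.exp (max w 1 * t n) * v (x + t n) := hbd' x hx0 _ (ht0 n)
      have hfnn : 0 ≤ S.f (x + t n) := S.f_nonneg _
      rw [abs_of_nonneg hfnn]
      calc S.f (x + t n) * v x
          ≤ S.f (x + t n) * (M * Real.exp (max w 1 * t n) * v (x + t n)) :=
            mul_le_mul_of_nonneg_left hvle hfnn
        _ = M * Real.exp (max w 1 * t n) * (S.f (x + t n) * v (x + t n)) := by ring
        _ ≤ M * Real.exp (max w 1 * t n) * (1 / 2) := by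
            apply mul_le_mul_of_nonneg_left (S.f_bound hxt)
            positivity
    have hmem : (1 / 2 : ℝ) ∈ (fun x => |translateW (t n) S.f x| * v x) '' Set.Ici (0:ℝ) := by
      refine ⟨S.xs n, S.xs_nonneg n, ?_⟩
      simp only [translateW]
      have hxc : S.xs n + t n = S.c n := by
        rw [ht, AuxSetup.c]; ring
      have hvxs := S.vxs_pos n
      rw [hxc, S.f_val n, abs_of_nonneg (by positivity)]
      field_simp
      rfl
    exact le_csSup hbddAbove hmem
  -- conclude
  intro hT
  have hev : ∀ᶠ s in Filter.atTop, dist (c0Norm v (translateW s S.f)) 0 < 1 / 2 :=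
    Metric.tendsto_nhds.1 hT (1 / 2) (by norm_num)
  obtain ⟨T, hTall⟩ := Filter.eventually_atTop.1 hev
  obtain ⟨n, hn⟩ := exists_nat_ge T
  have h1 := hTall (t n) (le_trans hn (le_of_lt (htn n)))
  rw [Real.dist_eq, sub_zero] at h1
  have h2 := hnorm n
  have := le_abs_self (c0Norm v (translateW (t n) S.f))
  linarith
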